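/- arXiv:1904.03840 — 2 statements merged into one kernel-verified Lean document; each statement's English description precedes it below -/
import Mathlib

section
/- Let l ≥ 3, d ≥ 1, and W(l,d) the Wilson monoid of M(l,d). The set I = {f ∈ W(l,d) : |f(L ∩ Dom(f))| ≤ 1} is a prime ideal of W(l,d): it is closed under left and right multiplication by arbitrary elements of W(l,d), and whenever a product of two elements of W(l,d) lies in I, one of the factors lies in I. -/
/-- A subsystem of a pairwise balanced design. -/
def Subsys {S : Type*} (L : Set (Set S)) (X : Set S) : Prop :=
  ∀ x ∈ X, ∀ y ∈ X, x ≠ y → ∀ B ∈ L, x ∈ B → y ∈ B → B ⊆ X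

/-- The domain of a partial function. -/
def pDom {S T : Type*} (f : S → Option T) : Set S := {x | f x ≠ none}

/-- The image of a partial function. -/
def pIm {S T : Type*} (f : S → Option T) : Set T := {y | ∃ x, f x = some y}

/-- Image of a set under a partial function (only defined points count). -/
def imOn {S T : Type*} (f : S → Option T) (B : Set S) : Set T :=
  {y | ∃ x ∈ B, f x = some y}

/-- Composition of partial functions: first `f`, then `g`. -/
def pComp {S T U : Type*} (g : T → Option U) (f : S → Option T) : S → Option U :=
  fun x => (f x).bind g

/-- The blocks of the PBD `M(l,d)`: the set `L` of size `l`, together with all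
two-element sets having at least one point outside `L` (these are exactly the
pairs `{i, j}` with `l + 1 ≤ j ≤ l + d`, `i < j`). -/
def MldBlocks {V : Type*} (L : Set V) : Set (Set V) :=
  {L} ∪ {B | ∃ x y : V, x ≠ y ∧ (x ∉ L ∨ y ∉ L) ∧ B = {x, y}}

/-- The open sets of `M(l,d)`: subsets of `D = Lᶜ`, and sets containing at
least `l - 1` points of `L`. -/
def OpenMld {V : Type*} (L : Set V) (l : ℕ) (X : Set V) : Prop :=
  X ⊆ Lᶜ ∨ l - 1 ≤ (L ∩ X).ncard

/-- The restriction of the partial function `f` to `L` is a permutation of `L`. -/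
def PermOnL {V : Type*} (L : Set V) (f : V → Option V) : Prop :=
  (∀ x ∈ L, ∃ y ∈ L, f x = some y) ∧
  (∀ x ∈ L, ∀ y ∈ L, f x = f y → x = y) ∧
  (∀ y ∈ L, ∃ x ∈ L, f x = some y)

/-- Membership in the Wilson monoid `W(l,d)` (characterization): open domain,
and either `|f(L ∩ Dom f)| ≤ 1`, or `L ⊆ Dom f` and `f` restricted to `L` is a
permutation of `L`. -/
def MemW {V : Type*} (L : Set V) (l : ℕ) (f : V → Option V) : Prop :=
  OpenMld L l (pDom f) ∧
    ((imOn f L).ncard ≤ 1 ∨ (L ⊆ pDom f ∧ PermOnL L f))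

section Aux

variable {V : Type*} [Fintype V]

lemma imOn_pComp (g f : V → Option V) (S : Set V) :
    imOn (pComp g f) S = imOn g (imOn f S) := by
  ext y
  constructor
  · rintro ⟨x, hx, hxy⟩
    rcases hfx : f x with _ | t
    · simp [pComp, hfx] at hxy
    · exact ⟨t, ⟨x, hx, hfx⟩, by simpa [pComp, hfx] using hxy⟩
  · rintro ⟨t, ⟨x, hx, hfx⟩, hty⟩
    exact ⟨x, hx, by simp [pComp, hfx, hty]⟩

lemma ncard_imOn_le (f : V → Option V) (S : Set V) : (imOn f S).ncard ≤ S.ncard := by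
  have h1 : ∀ y ∈ imOn f S, Option.some y ∈ f '' S := by
    rintro y ⟨x, hx, hxy⟩; exact ⟨x, hx, hxy⟩
  calc (imOn f S).ncard ≤ (f '' S).ncard :=
        Set.ncard_le_ncard_of_injOn Option.some h1
          (fun a _ b _ h => Option.some_injective _ h) (Set.toFinite _)
    _ ≤ S.ncard := Set.ncard_image_le S.toFinite

lemma pDom_pComp_subset (g f : V → Option V) : pDom (pComp g f) ⊆ pDom f := by
  intro x hx
  rcases hfx : f x with _ | t
  · exact absurd (by simp [pComp, hfx]) hx
  · simp [pDom, hfx]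

lemma open_comp_small {L : Set V} {l : ℕ} (hl : 3 ≤ l) (f g : V → Option V)
    (hf1 : (imOn f L).ncard ≤ 1) (hdom : l - 1 ≤ (L ∩ pDom f).ncard) :
    OpenMld L l (pDom (pComp g f)) := by
  have hne : (L ∩ pDom f).Nonempty := by
    apply Set.nonempty_of_ncard_ne_zero; omega
  obtain ⟨x0, hx0⟩ := hne
  rcases hfx0 : f x0 with _ | c
  · exact absurd hfx0 hx0.2
  have hc : ∀ x ∈ L ∩ pDom f, f x = some c := by
    intro x hx
    rcases hfx : f x with _ | c'
    · exact absurd hfx hx.2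
    have := (Set.ncard_le_one (Set.toFinite _)).mp hf1 c' ⟨x, hx.1, hfx⟩ c ⟨x0, hx0.1, hfx0⟩
    exact congrArg some this
  rcases hgc : g c with _ | y
  · left
    intro x hx hxL
    have hx' : x ∈ pDom f := pDom_pComp_subset g f hx
    exact hx (by simp [pComp, hc x ⟨hxL, hx'⟩, hgc])
  · right
    refine le_trans hdom (Set.ncard_le_ncard ?_ (Set.toFinite _))
    intro x hx
    exact ⟨hx.1, by simp [pDom, pComp, hc x hx, hgc]⟩

end Aux

theorem stmt17 {V : Type*} [Fintype V] (l d : ℕ) (hl : 3 ≤ l) (hd : 1 ≤ d)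
    (hcard : Fintype.card V = l + d) (L : Set V) (hL : L.ncard = l) :
    let I : Set (V → Option V) := {f | MemW L l f ∧ (imOn f L).ncard ≤ 1}
    -- I is an ideal of W(l,d):
    (∀ f ∈ I, ∀ g, MemW L l g → pComp g f ∈ I ∧ pComp f g ∈ I) ∧
    -- and I is prime:
    (∀ f g, MemW L l f → MemW L l g → pComp g f ∈ I → f ∈ I ∨ g ∈ I) := by
  intro I
  constructor
  · rintro f ⟨hfW, hf1⟩ g hgW
    constructor
    · -- pComp g f ∈ I
      have him : (imOn (pComp g f) L).ncard ≤ 1 := by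
        rw [imOn_pComp]
        exact le_trans (ncard_imOn_le g _) hf1
      refine ⟨⟨?_, Or.inl him⟩, him⟩
      rcases hfW.1 with hsub | hbig
      · exact Or.inl ((pDom_pComp_subset g f).trans hsub)
      · exact open_comp_small hl f g hf1 hbig
    · -- pComp f g ∈ I
      have him : (imOn (pComp f g) L).ncard ≤ 1 := by
        rw [imOn_pComp]
        rcases hgW.2 with hg1 | ⟨hgdom, hgperm⟩
        · exact le_trans (ncard_imOn_le f _) hg1
        · have hsub : imOn g L ⊆ L := by
            rintro y ⟨x, hx, hxy⟩
            obtain ⟨y', hy', hgy'⟩ := hgperm.1 x hx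
            rw [hxy] at hgy'
            injection hgy' with h
            rw [h]; exact hy'
          have hmono : imOn f (imOn g L) ⊆ imOn f L := by
            rintro y ⟨x, hx, hxy⟩; exact ⟨x, hsub hx, hxy⟩
          exact le_trans (Set.ncard_le_ncard hmono (Set.toFinite _)) hf1
      refine ⟨⟨?_, Or.inl him⟩, him⟩
      rcases hgW.1 with hsub | hbig
      · exact Or.inl ((pDom_pComp_subset f g).trans hsub)
      · rcases hgW.2 with hg1 | ⟨hgdom, hgperm⟩
        · exact open_comp_small hl g f hg1 hbig
        · -- g restricted to L is a permutation of L
          rcases hfW.1 with hfsub | hfbig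
          · left
            intro x hx hxL
            obtain ⟨y, hyL, hgy⟩ := hgperm.1 x hxL
            have hyD : f y = none := by
              by_contra h
              exact hfsub h hyL
            exact hx (by simp [pComp, hgy, hyD])
          · right
            have hV : Nonempty V := Fintype.card_pos_iff.mp (by omega)
            have hsur : ∀ y : V, ∃ x : V, y ∈ L ∩ pDom f → x ∈ L ∧ g x = some y := by
              intro y
              by_cases hy : y ∈ L ∩ pDom f
              · obtain ⟨x, hx, hgx⟩ := hgperm.2.2 y hy.1
                exact ⟨x, fun _ => ⟨hx, hgx⟩⟩
              · exact ⟨Classical.arbitrary V, fun h => absurd h hy⟩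
            choose φ hφ using hsur
            refine le_trans hfbig (Set.ncard_le_ncard_of_injOn φ ?_ ?_ (Set.toFinite _))
            · intro y hy
              obtain ⟨hxL, hgx⟩ := hφ y hy
              refine ⟨hxL, ?_⟩
              show pComp f g (φ y) ≠ none
              simpa [pComp, hgx, pDom] using hy.2
            · intro y hy y' hy' hEq
              have h1 := (hφ y hy).2
              have h2 := (hφ y' hy').2
              rw [hEq, h2] at h1
              injection h1 with h
              exact h.symm
  · -- primality
    rintro f g hfW hgW ⟨_, hc1⟩
    rcases hfW.2 with hf1 | ⟨hfdom, hfperm⟩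
    · exact Or.inl ⟨hfW, hf1⟩
    rcases hgW.2 with hg1 | ⟨hgdom, hgperm⟩
    · exact Or.inr ⟨hgW, hg1⟩
    exfalso
    have hLsub : L ⊆ imOn (pComp g f) L := by
      intro z hz
      obtain ⟨y, hy, hgy⟩ := hgperm.2.2 z hz
      obtain ⟨x, hx, hfx⟩ := hfperm.2.2 y hy
      exact ⟨x, hx, by simp [pComp, hfx, hgy]⟩
    have hle := Set.ncard_le_ncard hLsub (Set.toFinite _)
    rw [hL] at hle
    omega
end

section
/- Let l ≥ 3, d ≥ 1, and f ∈ W(l,d), the Wilson monoid of M(l,d). Then f is a regular element (there exists g ∈ W(l,d) with f ∘ g ∘ f = f) if and only if f restricted to L is a permutation of L, or |Im(f) ∩ L| ≤ 1. -/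
theorem stmt18 {V : Type*} [Fintype V] (l d : ℕ) (hl : 3 ≤ l) (hd : 1 ≤ d)
    (hcard : Fintype.card V = l + d) (L : Set V) (hL : L.ncard = l)
    (f : V → Option V) (hf : MemW L l f) :
    (∃ g : V → Option V, MemW L l g ∧ pComp f (pComp g f) = f) ↔
      (PermOnL L f ∨ (pIm f ∩ L).ncard ≤ 1) := by
  classical
  constructor
  · rintro ⟨g, hg, hfgf⟩
    rcases hf.2 with him | ⟨_, hperm⟩
    · right
      rw [Set.ncard_le_one (Set.toFinite _)]
      rintro y1 ⟨⟨x1, hx1⟩, hy1L⟩ y2 ⟨⟨x2, hx2⟩, hy2L⟩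
      by_contra hne
      -- extract g y1 = some z1 with f z1 = some y1
      have key : ∀ x y, f x = some y → ∃ z, g y = some z ∧ f z = some y := by
        intro x y hx
        have h2 := congrFun hfgf x
        simp only [pComp, hx] at h2
        cases hz : g y with
        | none => simp [hz] at h2
        | some z => simp only [Option.bind_some, hz] at h2; exact ⟨z, rfl, h2⟩
      obtain ⟨z1, hgz1, hfz1⟩ := key x1 y1 hx1
      obtain ⟨z2, hgz2, hfz2⟩ := key x2 y2 hx2
      have hzne : z1 ≠ z2 := by
        rintro rfl; rw [hfz1] at hfz2; exact hne (Option.some.inj hfz2)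
      rcases hg.2 with himg | ⟨_, hpg⟩
      · exact hzne (((Set.ncard_le_one (Set.toFinite _)).1 himg) z1
          ⟨y1, hy1L, hgz1⟩ z2 ⟨y2, hy2L, hgz2⟩)
      · obtain ⟨w1, hw1L, hw1⟩ := hpg.1 y1 hy1L
        obtain ⟨w2, hw2L, hw2⟩ := hpg.1 y2 hy2L
        rw [hgz1] at hw1; rw [hgz2] at hw2
        have hz1L : z1 ∈ L := (Option.some.inj hw1) ▸ hw1L
        have hz2L : z2 ∈ L := (Option.some.inj hw2) ▸ hw2L
        exact hne (((Set.ncard_le_one (Set.toFinite _)).1 him) y1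
          ⟨z1, hz1L, hfz1⟩ y2 ⟨z2, hz2L, hfz2⟩)
    · left; exact hperm
  · rintro (hperm | him)
    · -- inverse of the permutation on L, section elsewhere
      obtain ⟨hmap, hinj, hsurj⟩ := hperm
      refine ⟨fun y => if hy : y ∈ L then some (hsurj y hy).choose
        else if h : y ∈ pIm f then some h.choose else none, ⟨?_, ?_⟩, ?_⟩
      · right
        have hLsub : L ⊆ pDom (fun y => if hy : y ∈ L then some (hsurj y hy).choose
            else if h : y ∈ pIm f then some h.choose else none) := by
          intro y hy; simp [pDom, dif_pos hy]
        have : L ∩ _ = L := Set.inter_eq_self_of_subset_left hLsub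
        rw [this, hL]; omega
      · right
        constructor
        · intro y hy; simp [pDom, dif_pos hy]
        · refine ⟨?_, ?_, ?_⟩
          · intro y hy
            exact ⟨(hsurj y hy).choose, (hsurj y hy).choose_spec.1, dif_pos hy⟩
          · intro y1 h1 y2 h2 heq
            dsimp only at heq
            rw [dif_pos h1, dif_pos h2] at heq
            have := Option.some.inj heq
            have e1 := (hsurj y1 h1).choose_spec.2
            have e2 := (hsurj y2 h2).choose_spec.2
            rw [this, e2] at e1
            exact (Option.some.inj e1).symm
          · intro x hx
            obtain ⟨y, hyL, hfy⟩ := hmap x hx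
            refine ⟨y, hyL, ?_⟩
            dsimp only
            rw [dif_pos hyL]
            congr 1
            have e := (hsurj y hyL).choose_spec
            exact hinj _ e.1 x hx (e.2.trans hfy.symm)
      · funext x
        simp only [pComp]
        cases hx : f x with
        | none => simp
        | some y =>
          simp only [Option.bind_some]
          by_cases hy : y ∈ L
          · rw [dif_pos hy]
            exact (hsurj y hy).choose_spec.2
          · have hmem : y ∈ pIm f := ⟨x, hx⟩
            rw [dif_neg hy, dif_pos hmem]
            exact hmem.choose_spec
    · -- constant-ish inverse
      have hsub : ∀ a ∈ pIm f ∩ L, ∀ b ∈ pIm f ∩ L, a = b :=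
        (Set.ncard_le_one (Set.toFinite _)).1 him
      have hV : Nonempty V := by
        rw [← Fintype.card_pos_iff, hcard]; omega
      obtain ⟨c, hc⟩ : ∃ c : V, ∀ y, y ∈ pIm f ∩ L → ∀ h : y ∈ pIm f,
          Classical.choose h = c := by
        by_cases h0 : (pIm f ∩ L).Nonempty
        · obtain ⟨y0, hy0⟩ := h0
          refine ⟨Classical.choose hy0.1, fun y hy h => ?_⟩
          obtain rfl := hsub y hy y0 hy0
          rfl
        · exact ⟨Classical.arbitrary V, fun y hy _ => absurd ⟨y, hy⟩ h0⟩
      refine ⟨fun y => if h : y ∈ pIm f then some (Classical.choose h) else some c,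
        ⟨?_, ?_⟩, ?_⟩
      · right
        have hdom : pDom (fun y => if h : y ∈ pIm f then some (Classical.choose h)
            else some c) = Set.univ := by
          apply Set.eq_univ_of_forall
          intro y
          simp only [pDom, Set.mem_setOf_eq]
          split <;> simp
        rw [hdom, Set.inter_univ, hL]; omega
      · left
        have hsub' : imOn (fun y => if h : y ∈ pIm f then some (Classical.choose h)
            else some c) L ⊆ {c} := by
          rintro z ⟨y, hyL, hz⟩
          dsimp only at hz
          by_cases h : y ∈ pIm f
          · rw [dif_pos h] at hz
            have := hc y ⟨h, hyL⟩ h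
            rw [this] at hz
            exact (Option.some.inj hz).symm
          · rw [dif_neg h] at hz
            exact (Option.some.inj hz).symm
        calc _ ≤ ({c} : Set V).ncard := Set.ncard_le_ncard hsub' (Set.toFinite _)
          _ = 1 := Set.ncard_singleton c
      · funext x
        simp only [pComp]
        cases hx : f x with
        | none => simp
        | some y =>
          simp only [Option.bind_some]
          have hmem : y ∈ pIm f := ⟨x, hx⟩
          rw [dif_pos hmem]
          exact hmem.choose_spec
end
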